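/- Fix integers k ≥ 1, n ≥ 1, and r > s ≥ 0. Let b be the number of odd-length compositions of n+k-1 with all parts at least k and congruent to k+s modulo r, minus the number of even-length such compositions. Then b = Σ_{ri + j(k+s) = n-1-s, i,j ≥ 0} (-1)^j · C(i+j, i). -/
import Mathlib

open Finset

/-- Finset of lists of positive naturals summing to `N`. -/
def LS : ℕ → Finset (List ℕ)
  | 0 => {[]}
  | (N+1) => (Finset.range (N+1)).biUnion fun p => (LS (N - p)).image fun l => (p+1) :: l
  decreasing_by omega

lemma mem_LS : ∀ (N : ℕ) (l : List ℕ), l ∈ LS N ↔ l.sum = N ∧ ∀ x ∈ l, 0 < x := by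
  intro N
  induction N using Nat.strong_induction_on with
  | _ N ih =>
    intro l
    match N with
    | 0 =>
      simp only [LS, Finset.mem_singleton]
      constructor
      · rintro rfl; simp
      · rintro ⟨h1, h2⟩
        cases l with
        | nil => rfl
        | cons a t =>
          exfalso
          have := h2 a (by simp)
          simp at h1
          omega
    | (N+1) =>
      rw [LS]
      simp only [mem_biUnion, mem_image, mem_range]
      constructor
      · rintro ⟨p, hp, t, ht, rfl⟩
        rw [ih (N - p) (by omega) t] at ht
        obtain ⟨hsum, hpos⟩ := ht
        refine ⟨by simp [hsum]; omega, ?_⟩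
        intro x hx
        rcases List.mem_cons.1 hx with rfl | hx
        · omega
        · exact hpos x hx
      · rintro ⟨hsum, hpos⟩
        cases l with
        | nil => simp at hsum
        | cons a t =>
          have ha : 0 < a := hpos a (by simp)
          simp only [List.sum_cons] at hsum
          refine ⟨a - 1, by omega, t, ?_, by congr 1; omega⟩
          rw [ih (N - (a-1)) (by omega) t]
          exact ⟨by omega, fun x hx => hpos x (List.mem_cons_of_mem _ hx)⟩


def gp (k r s x : ℕ) : Prop := k ≤ x ∧ x ≡ k + s [MOD r]

instance (k r s : ℕ) : DecidablePred (gp k r s) := fun _ => by unfold gp; infer_instance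

def w (k r s : ℕ) (l : List ℕ) : ℤ := if ∀ x ∈ l, gp k r s x then (-1) ^ (l.length + 1) else 0

def F (k r s N : ℕ) : ℤ := ∑ l ∈ LS N, w k r s l

lemma w_cons (k r s p : ℕ) (t : List ℕ) :
    w k r s (p :: t) = if gp k r s p then -(w k r s t) else 0 := by
  by_cases hp : gp k r s p
  · rw [if_pos hp]
    unfold w
    by_cases ht : ∀ x ∈ t, gp k r s x
    · rw [if_pos (List.forall_mem_cons.2 ⟨hp, ht⟩), if_pos ht, List.length_cons, pow_succ]
      ring
    · rw [if_neg (by rw [List.forall_mem_cons]; tauto), if_neg ht, neg_zero]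
  · rw [if_neg hp]
    unfold w
    rw [if_neg (by rw [List.forall_mem_cons]; tauto)]

lemma F_succ (k r s N : ℕ) :
    F k r s (N+1) = -∑ p ∈ range (N+1), (if gp k r s (p+1) then F k r s (N - p) else 0) := by
  have hdisj : (↑(range (N+1)) : Set ℕ).PairwiseDisjoint
      (fun p => (LS (N - p)).image fun l => (p+1) :: l) := by
    intro a _ b _ hab
    rw [Function.onFun, Finset.disjoint_left]
    rintro l hla hlb
    simp only [mem_image] at hla hlb
    obtain ⟨t, _, rfl⟩ := hla
    obtain ⟨u, _, hu⟩ := hlb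
    apply hab
    simp only [List.cons.injEq] at hu
    omega
  show ∑ l ∈ LS (N+1), w k r s l = _
  rw [LS, Finset.sum_biUnion hdisj, ← Finset.sum_neg_distrib]
  refine Finset.sum_congr rfl fun p hp => ?_
  rw [Finset.sum_image (by intro x hx y hy h; simp only [List.cons.injEq, true_and] at h; exact h)]
  simp only [w_cons]
  by_cases hgp : gp k r s (p+1)
  · simp only [hgp, if_true, F, ← Finset.sum_neg_distrib]
  · simp [hgp]

lemma gp_iff (k r s : ℕ) (hk : 1 ≤ k) (hrs : s < r) (q : ℕ) :
    gp k r s q ↔ ∃ m, q = (k + s) + r * m := by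
  constructor
  · rintro ⟨h1, h2⟩
    have hks : k + s ≤ q := by
      by_contra hlt
      push_neg at hlt
      have hdvd : r ∣ (k + s) - q := (Nat.modEq_iff_dvd' (le_of_lt hlt)).1 h2
      have := Nat.le_of_dvd (by omega) hdvd
      omega
    have hdvd : r ∣ q - (k + s) := (Nat.modEq_iff_dvd' hks).1 h2.symm
    obtain ⟨m, hm⟩ := hdvd
    exact ⟨m, by rw [← hm]; omega⟩
  · rintro ⟨m, rfl⟩
    refine ⟨(Nat.le_add_right k s).trans (Nat.le_add_right _ _), ?_⟩
    show (k+s+r*m) % r = (k+s) % r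
    simp [Nat.add_mul_mod_self_left]

lemma F_ks (k r s : ℕ) (hk : 1 ≤ k) (hrs : s < r) (M : ℕ) :
    F k r s (M + k + s) = -∑ m ∈ range (M / r + 1), F k r s (M - r * m) := by
  have hr : 0 < r := by omega
  have h1 : M + k + s = (M + k + s - 1) + 1 := by omega
  rw [h1, F_succ]
  congr 1
  rw [← Finset.sum_subset (s₁ := (range (M / r + 1)).image (fun m => k + s - 1 + r * m))]
  · rw [Finset.sum_image (fun x hx y hy h => by
      have : r * x = r * y := by omega
      exact Nat.eq_of_mul_eq_mul_left hr this)]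
    refine Finset.sum_congr rfl fun m hm => ?_
    have h2 : k + s - 1 + r * m + 1 = k + s + r * m := by omega
    rw [h2, if_pos ((gp_iff k r s hk hrs _).2 ⟨m, rfl⟩)]
    congr 1
    omega
  · -- image ⊆ range
    intro p hp
    simp only [mem_image, mem_range] at hp ⊢
    obtain ⟨m, hm, rfl⟩ := hp
    have : m * r ≤ M := (Nat.le_div_iff_mul_le hr).1 (by omega)
    have : r * m ≤ M := by rw [mul_comm]; exact this
    omega
  · -- vanishing outside image
    intro p hp hnp
    rw [if_neg]
    intro hgp
    obtain ⟨m, hm⟩ := (gp_iff k r s hk hrs (p+1)).1 hgp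
    apply hnp
    simp only [mem_image, mem_range]
    refine ⟨m, ?_, by omega⟩
    simp only [mem_range] at hp
    have hrm : r * m ≤ M := by omega
    have : m ≤ M / r := (Nat.le_div_iff_mul_le hr).2 (by rw [mul_comm]; exact hrm)
    omega

lemma F_rec (k r s : ℕ) (hk : 1 ≤ k) (hrs : s < r) (M : ℕ) :
    F k r s (M + k + s) = (if r ≤ M then F k r s (M - r + k + s) else 0) - F k r s M := by
  have hr : 0 < r := by omega
  by_cases h : r ≤ M
  · rw [if_pos h, F_ks k r s hk hrs M, F_ks k r s hk hrs (M - r)]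
    have hdiv : M / r = (M - r) / r + 1 := Nat.div_eq_sub_div hr h
    rw [hdiv, Finset.sum_range_succ']
    have he : ∀ m : ℕ, M - r * (m+1) = M - r - r * m := by
      intro m; rw [Nat.mul_succ]; omega
    simp only [he, Nat.mul_zero, Nat.sub_zero]
    ring
  · rw [if_neg h, F_ks k r s hk hrs M, Nat.div_eq_of_lt (by omega)]
    simp

lemma F_zero (k r s : ℕ) : F k r s 0 = -1 := by
  rw [F, LS]
  simp [w]

lemma F_small (k r s : ℕ) (hk : 1 ≤ k) (hrs : s < r) (M : ℕ) (h1 : 1 ≤ M) (h2 : M < k + s) :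
    F k r s M = 0 := by
  obtain ⟨N, rfl⟩ : ∃ N, M = N + 1 := ⟨M - 1, by omega⟩
  rw [F_succ, Finset.sum_eq_zero, neg_zero]
  intro p hp
  rw [if_neg]
  intro hgp
  obtain ⟨m, hm⟩ := (gp_iff k r s hk hrs _).1 hgp
  simp only [mem_range] at hp
  omega

def Ahat (k r s M : ℕ) : ℤ :=
  ∑ p ∈ ((range (M+1)) ×ˢ (range (M+1))).filter
      (fun p : ℕ × ℕ => r * p.1 + p.2 * (k + s) = M),
    (-1) ^ p.2 * ((p.1 + p.2).choose p.1 : ℤ)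

lemma Ahat_rec (k r s : ℕ) (hk : 1 ≤ k) (hr : 1 ≤ r) (M : ℕ) :
    Ahat k r s M = (if r ≤ M then Ahat k r s (M - r) else 0)
      - (if k + s ≤ M then Ahat k r s (M - (k+s)) else 0)
      + (if M = 0 then 1 else 0) := by
  set D : ℕ → Finset (ℕ × ℕ) := fun M => ((range (M+1)) ×ˢ (range (M+1))).filter
      (fun p : ℕ × ℕ => r * p.1 + p.2 * (k + s) = M) with hD
  have memD : ∀ (M' i j : ℕ), (i, j) ∈ D M' ↔
      (i < M' + 1 ∧ j < M' + 1) ∧ r * i + j * (k + s) = M' := by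
    intro M' i j
    simp [hD, Finset.mem_filter, Finset.mem_product]
  have key : ∀ p : ℕ × ℕ, p ∈ D M →
      (-1:ℤ)^p.2 * ((p.1+p.2).choose p.1 : ℤ)
        = ((if 1 ≤ p.1 then (-1:ℤ)^p.2 * ((p.1-1+p.2).choose (p.1-1) : ℤ) else 0)
        + (if 1 ≤ p.2 then (-1:ℤ)^p.2 * ((p.1+p.2-1).choose p.1 : ℤ) else 0))
        + (if p.1 = 0 ∧ p.2 = 0 then 1 else 0) := by
    rintro ⟨i, j⟩ _
    match i, j with
    | 0, 0 => simp
    | 0, (j+1) => simp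
    | (i+1), 0 => simp [Nat.choose_self]
    | (i+1), (j+1) =>
      rw [if_pos (by omega), if_pos (by omega), if_neg (by omega), add_zero]
      have e1 : i + 1 - 1 = i := rfl
      have e2 : (i+1) + (j+1) - 1 = i + j + 1 := by omega
      have e3 : (i+1) + (j+1) = (i+j+1) + 1 := by omega
      have e4 : i + (j+1) = i + j + 1 := by omega
      rw [e1, e2, e3, e4, Nat.choose_succ_succ (i+j+1) i]
      push_cast
      ring
  rw [show Ahat k r s M = ∑ p ∈ D M, (-1:ℤ)^p.2 * ((p.1+p.2).choose p.1 : ℤ) from rfl]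
  rw [Finset.sum_congr rfl key, Finset.sum_add_distrib, Finset.sum_add_distrib]
  have S1 : ∑ p ∈ D M, (if 1 ≤ p.1 then (-1:ℤ)^p.2 * ((p.1-1+p.2).choose (p.1-1) : ℤ) else 0)
      = (if r ≤ M then Ahat k r s (M - r) else 0) := by
    by_cases h : r ≤ M
    · rw [if_pos h, ← Finset.sum_filter]
      rw [show Ahat k r s (M-r) = ∑ p ∈ D (M-r), (-1:ℤ)^p.2 * ((p.1+p.2).choose p.1 : ℤ) from rfl]
      refine Finset.sum_nbij' (fun p => (p.1 - 1, p.2)) (fun q => (q.1 + 1, q.2)) ?_ ?_ ?_ ?_ ?_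
      · rintro ⟨i, j⟩ hp
        rw [Finset.mem_filter, memD] at hp
        obtain ⟨⟨⟨hi, hj⟩, heq⟩, hi1⟩ := hp
        have hi1 : 1 ≤ i := hi1
        obtain ⟨a, rfl⟩ : ∃ a, i = a + 1 := ⟨i - 1, by omega⟩
        rw [Nat.mul_succ] at heq
        show (a + 1 - 1, j) ∈ D (M - r)
        rw [show a + 1 - 1 = a by omega, memD]
        have ha : a ≤ r * a := Nat.le_mul_of_pos_left a hr
        have hb : j ≤ j * (k + s) := Nat.le_mul_of_pos_right j (by omega)
        omega
      · rintro ⟨i, j⟩ hq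
        dsimp only
        rw [memD] at hq
        obtain ⟨⟨hi, hj⟩, heq⟩ := hq
        rw [Finset.mem_filter, memD]
        have ha : i ≤ r * i := Nat.le_mul_of_pos_left i hr
        have hb : j ≤ j * (k + s) := Nat.le_mul_of_pos_right j (by omega)
        rw [Nat.mul_succ]
        refine ⟨⟨⟨?_, ?_⟩, ?_⟩, ?_⟩
        · omega
        · omega
        · omega
        · show 1 ≤ i + 1
          omega
      · rintro ⟨i, j⟩ hp
        rw [Finset.mem_filter] at hp
        have hi1 : 1 ≤ i := hp.2
        show (i - 1 + 1, j) = (i, j)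
        rw [Prod.mk.injEq]
        omega
      · rintro ⟨i, j⟩ _
        show (i + 1 - 1, j) = (i, j)
        rw [Prod.mk.injEq]
        omega
      · rintro ⟨i, j⟩ _
        rfl
    · rw [if_neg h]
      apply Finset.sum_eq_zero
      rintro ⟨i, j⟩ hp
      rw [memD] at hp
      have hni : ¬ (1 ≤ i) := by
        intro hi
        have ha : r ≤ r * i := Nat.le_mul_of_pos_right r (by omega)
        omega
      exact if_neg hni
  have S2 : ∑ p ∈ D M, (if 1 ≤ p.2 then (-1:ℤ)^p.2 * ((p.1+p.2-1).choose p.1 : ℤ) else 0)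
      = -(if k + s ≤ M then Ahat k r s (M - (k+s)) else 0) := by
    by_cases h : k + s ≤ M
    · rw [if_pos h, ← Finset.sum_filter]
      rw [show Ahat k r s (M-(k+s)) = ∑ p ∈ D (M-(k+s)), (-1:ℤ)^p.2 * ((p.1+p.2).choose p.1 : ℤ) from rfl]
      rw [← Finset.sum_neg_distrib]
      refine Finset.sum_nbij' (fun p => (p.1, p.2 - 1)) (fun q => (q.1, q.2 + 1)) ?_ ?_ ?_ ?_ ?_
      · rintro ⟨i, j⟩ hp
        rw [Finset.mem_filter, memD] at hp
        obtain ⟨⟨⟨hi, hj⟩, heq⟩, hj1⟩ := hp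
        have hj1 : 1 ≤ j := hj1
        obtain ⟨b, rfl⟩ : ∃ b, j = b + 1 := ⟨j - 1, by omega⟩
        rw [Nat.succ_mul] at heq
        show (i, b + 1 - 1) ∈ D (M - (k+s))
        rw [show b + 1 - 1 = b by omega, memD]
        have ha : i ≤ r * i := Nat.le_mul_of_pos_left i hr
        have hb : b ≤ b * (k + s) := Nat.le_mul_of_pos_right b (by omega)
        omega
      · rintro ⟨i, j⟩ hq
        dsimp only
        rw [memD] at hq
        obtain ⟨⟨hi, hj⟩, heq⟩ := hq
        rw [Finset.mem_filter, memD]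
        have ha : i ≤ r * i := Nat.le_mul_of_pos_left i hr
        have hb : j ≤ j * (k + s) := Nat.le_mul_of_pos_right j (by omega)
        rw [Nat.succ_mul]
        refine ⟨⟨⟨?_, ?_⟩, ?_⟩, ?_⟩
        · omega
        · omega
        · omega
        · show 1 ≤ j + 1
          omega
      · rintro ⟨i, j⟩ hp
        rw [Finset.mem_filter] at hp
        have hj1 : 1 ≤ j := hp.2
        show (i, j - 1 + 1) = (i, j)
        rw [Prod.mk.injEq]
        omega
      · rintro ⟨i, j⟩ _
        show (i, j + 1 - 1) = (i, j)
        rw [Prod.mk.injEq]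
        omega
      · rintro ⟨i, j⟩ hp
        rw [Finset.mem_filter] at hp
        have hj1 : 1 ≤ j := hp.2
        obtain ⟨b, rfl⟩ : ∃ b, j = b + 1 := ⟨j - 1, by omega⟩
        show (-1:ℤ)^(b+1) * ((i + (b+1) - 1).choose i : ℤ) = -((-1)^((i, b+1-1).2) * (((i, b+1-1).1 + (i, b+1-1).2).choose (i, b+1-1).1 : ℤ))
        rw [show i + (b+1) - 1 = i + b by omega, show b + 1 - 1 = b by omega, pow_succ]
        ring
    · rw [if_neg h, neg_zero]
      apply Finset.sum_eq_zero
      rintro ⟨i, j⟩ hp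
      rw [memD] at hp
      have hnj : ¬ (1 ≤ j) := by
        intro hj
        have ha : k + s ≤ j * (k + s) := Nat.le_mul_of_pos_left (k+s) (by omega)
        omega
      exact if_neg hnj
  have S3 : ∑ p ∈ D M, (if p.1 = 0 ∧ p.2 = 0 then (1:ℤ) else 0)
      = (if M = 0 then 1 else 0) := by
    by_cases h : M = 0
    · subst h
      have hD0 : D 0 = {((0:ℕ), (0:ℕ))} := by
        apply Finset.ext
        rintro ⟨i, j⟩
        rw [memD]
        simp only [Finset.mem_singleton, Prod.mk.injEq]
        constructor
        · rintro ⟨⟨hi, hj⟩, -⟩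
          omega
        · rintro ⟨rfl, rfl⟩
          norm_num
      rw [hD0, Finset.sum_singleton]
      norm_num
    · rw [if_neg h]
      apply Finset.sum_eq_zero
      rintro ⟨i, j⟩ hp
      rw [memD] at hp
      have hnij : ¬ (i = 0 ∧ j = 0) := by
        rintro ⟨rfl, rfl⟩
        simp only [Nat.mul_zero, Nat.zero_mul] at hp
        omega
      exact if_neg hnij
  rw [S1, S2, S3]
  ring

/-- Number of odd-length (`parity = true`) resp. even-length compositions of `n+k-1`
with all parts at least `k` and congruent to `k+s` modulo `r`. -/
noncomputable def countCong (k n r s : ℕ) (parity : Bool) : ℕ :=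
  Nat.card {c : Composition (n + k - 1) //
    (∀ x ∈ c.blocks, k ≤ x ∧ x ≡ k + s [MOD r]) ∧
    (if parity then Odd c.length else Even c.length)}

-- KEY strong induction
lemma key_eq (k r s : ℕ) (hk : 1 ≤ k) (hrs : s < r) : ∀ M, F k r s (M + k + s) = Ahat k r s M := by
  intro M
  induction M using Nat.strong_induction_on with
  | _ M ih =>
    rw [F_rec k r s hk hrs M, Ahat_rec k r s hk (by omega) M]
    have h1 : (if r ≤ M then F k r s (M - r + k + s) else 0)
        = (if r ≤ M then Ahat k r s (M - r) else 0) := by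
      split_ifs with h
      · exact ih (M - r) (by omega)
      · rfl
    have h2 : F k r s M = (if k + s ≤ M then Ahat k r s (M - (k+s)) else 0)
        - (if M = 0 then 1 else 0) := by
      rcases Nat.lt_or_ge M (k+s) with h | h
      · rw [if_neg (by omega)]
        rcases Nat.eq_zero_or_pos M with rfl | hM
        · rw [F_zero, if_pos rfl]
          norm_num
        · rw [F_small k r s hk hrs M hM h, if_neg (by omega)]
          norm_num
      · rw [if_pos h, if_neg (by omega), sub_zero]
        have hIH := ih (M - (k+s)) (by omega)
        rw [← hIH]
        congr 1
        omega
    rw [h1, h2]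
    ring

-- bridge
lemma countCong_eq (k n r s : ℕ) (b : Bool) :
    countCong k n r s b
      = ((LS (n + k - 1)).filter
          (fun l => (∀ x ∈ l, gp k r s x) ∧ (if b then Odd l.length else Even l.length))).card := by
  rw [countCong, ← Nat.card_eq_finsetCard]
  refine Nat.card_congr ⟨?_, ?_, ?_, ?_⟩
  · rintro ⟨c, h⟩
    refine ⟨c.blocks, ?_⟩
    rw [Finset.mem_filter, mem_LS]
    exact ⟨⟨c.blocks_sum, fun x hx => c.blocks_pos hx⟩, ⟨fun x hx => ⟨(h.1 x hx).1, (h.1 x hx).2⟩, h.2⟩⟩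
  · rintro ⟨l, hl⟩
    have hl' := (Finset.mem_filter.1 hl)
    have hl'' := (mem_LS _ _).1 hl'.1
    exact ⟨⟨l, fun {x} hx => hl''.2 x hx, hl''.1⟩, fun x hx => ⟨(hl'.2.1 x hx).1, (hl'.2.1 x hx).2⟩, hl'.2.2⟩
  · rintro ⟨c, h⟩
    rfl
  · rintro ⟨l, hl⟩
    rfl

lemma F_eq_counts (k n r s : ℕ) :
    F k r s (n + k - 1) = (countCong k n r s true : ℤ) - countCong k n r s false := by
  rw [countCong_eq k n r s true, countCong_eq k n r s false]
  rw [F, show (fun l => w k r s l) = fun l => (if ∀ x ∈ l, gp k r s x then ((-1:ℤ)) ^ (l.length + 1) else 0) from rfl]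
  rw [← Finset.sum_filter]
  have hpt : ∀ l : List ℕ, ((-1:ℤ)) ^ (l.length + 1) = if Odd l.length then 1 else -1 := by
    intro l
    by_cases h : Odd l.length
    · rw [if_pos h, Even.neg_one_pow]
      exact Odd.add_one h
    · rw [if_neg h, Odd.neg_one_pow]
      exact Even.add_one (Nat.not_odd_iff_even.1 h)
  simp only [hpt]
  rw [Finset.sum_ite, Finset.sum_const, Finset.sum_const, Finset.filter_filter, Finset.filter_filter]
  have hcongr : ∀ (P : List ℕ → Prop) [DecidablePred P],
      ((LS (n+k-1)).filter (fun l => (∀ x ∈ l, gp k r s x) ∧ P l)) =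
      ((LS (n+k-1)).filter (fun l => (∀ x ∈ l, gp k r s x) ∧ (P l : Prop))) := fun _ _ => rfl
  have e1 : ((LS (n+k-1)).filter (fun l => (∀ x ∈ l, gp k r s x) ∧ Odd l.length))
      = ((LS (n+k-1)).filter (fun l => (∀ x ∈ l, gp k r s x) ∧ (if true then Odd l.length else Even l.length))) := by
    simp only [if_true]
  have e2 : ((LS (n+k-1)).filter (fun l => (∀ x ∈ l, gp k r s x) ∧ ¬ Odd l.length))
      = ((LS (n+k-1)).filter (fun l => (∀ x ∈ l, gp k r s x) ∧ (if false then Odd l.length else Even l.length))) := by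
    apply Finset.filter_congr
    intro l _
    simp [Nat.not_odd_iff_even]
  rw [e1, e2]
  simp only [nsmul_eq_mul, mul_one, mul_neg]
  ring

/-- `b_{k,n}^{r,s} = Σ_{ri + j(k+s) = n-1-s} (-1)^j C(i+j, i)`. -/
theorem signed_munagi_congruence (k n r s : ℕ) (hk : 1 ≤ k) (hn : 1 ≤ n) (hrs : s < r) :
    (countCong k n r s true : ℤ) - countCong k n r s false =
      ∑ p ∈ (Finset.range n ×ˢ Finset.range n).filter
        (fun p : ℕ × ℕ => (r * p.1 + p.2 * (k + s) : ℤ) = (n : ℤ) - 1 - s),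
        (-1) ^ p.2 * ((p.1 + p.2).choose p.1 : ℤ) := by
  rw [← F_eq_counts]
  rcases le_or_gt n s with h | h
  · rw [F_small k r s hk hrs (n+k-1) (by omega) (by omega)]
    symm
    rw [Finset.sum_filter]
    apply Finset.sum_eq_zero
    rintro ⟨i, j⟩ _
    rw [if_neg]
    intro hEq
    have h0 : (0:ℤ) ≤ (r:ℤ) * i + (j:ℤ) * ((k:ℤ) + s) := by positivity
    have h1 : (0:ℤ) ≤ (n:ℤ) - 1 - s := hEq ▸ h0
    omega
  · have hM : n + k - 1 = (n - 1 - s) + k + s := by omega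
    rw [hM, key_eq k r s hk hrs (n-1-s), Ahat]
    apply Finset.sum_congr _ (fun _ _ => rfl)
    apply Finset.ext
    rintro ⟨i, j⟩
    simp only [Finset.mem_filter, Finset.mem_product, Finset.mem_range]
    have ha : i ≤ r * i := Nat.le_mul_of_pos_left i (by omega)
    have hb : j ≤ j * (k + s) := Nat.le_mul_of_pos_right j (by omega)
    have hcast : ((n - 1 - s : ℕ) : ℤ) = (n : ℤ) - 1 - s := by omega
    have hpc : ((r * i + j * (k + s) : ℕ) : ℤ) = (r:ℤ) * i + (j:ℤ) * ((k:ℤ) + s) := by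
      push_cast
      ring
    constructor
    · rintro ⟨⟨hi, hj⟩, heq⟩
      refine ⟨⟨by omega, by omega⟩, ?_⟩
      show (r:ℤ) * i + (j:ℤ) * ((k:ℤ) + s) = (n : ℤ) - 1 - s
      rw [← hpc, heq, hcast]
    · rintro ⟨⟨hi, hj⟩, heq⟩
      have heq' : (r:ℤ) * i + (j:ℤ) * ((k:ℤ) + s) = (n : ℤ) - 1 - s := heq
      have heqN : r * i + j * (k + s) = n - 1 - s :=
        Nat.cast_injective (hpc.trans (heq'.trans hcast.symm))
      exact ⟨⟨by omega, by omega⟩, heqN⟩
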